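/- Let m ∈ ℕ₀. Suppose S and H are bounded linear operators on the complex Hilbert space ℓ²(ℕ₀) whose matrix entries with respect to the standard orthonormal basis (e_n) are ⟨S e_k, e_n⟩ = c_{k+n+2m+2} and ⟨H e_k, e_n⟩ = 1/(k+n+m+3/2) for all k, n ∈ ℕ₀, where c_j = (2/(π j))·sin(π j/2) for integers j ≥ 1. Then there exists a unitary operator (linear isometric equivalence) U from ℓ²(ℕ₀) onto ℓ²(ℕ₀) × ℓ²(ℕ₀) such that for every x ∈ ℓ²(ℕ₀): U(S x) = ( ((−1)^{m+1}/π)·H((U x)₁), ((−1)^m/π)·H((U x)₂) ). -/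

import Mathlib

open MeasureTheory

/-- The Fourier coefficients `c_j = (2/(π j))·sin(π j/2)`. -/
noncomputable def cCoef (j : ℕ) : ℝ := (2 / (Real.pi * j)) * Real.sin (Real.pi * j / 2)

/-- The Hilbert space `ℓ²(ℕ₀)` of square-summable complex sequences. -/
noncomputable abbrev l2 := lp (fun _ : ℕ => ℂ) 2

/-- The standard orthonormal basis vectors of `ℓ²(ℕ₀)`. -/
noncomputable def e (n : ℕ) : l2 := lp.single 2 n (1 : ℂ)

open scoped ComplexConjugate
set_option maxHeartbeats 1000000
set_option synthInstance.maxHeartbeats 400000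

lemma cCoef_even (t : ℕ) : cCoef (2 * t) = 0 := by
  unfold cCoef
  have h : Real.pi * (2 * t : ℕ) / 2 = (t : ℝ) * Real.pi := by push_cast; ring
  rw [h, Real.sin_nat_mul_pi, mul_zero]

lemma cCoef_odd (t : ℕ) : cCoef (2 * t + 1) = ((-1 : ℝ) ^ t / Real.pi) * (1 / ((t : ℝ) + 1 / 2)) := by
  unfold cCoef
  have h : Real.pi * (2 * t + 1 : ℕ) / 2 = (t : ℝ) * Real.pi + Real.pi / 2 := by push_cast; ring
  have hc : Real.cos ((t : ℝ) * Real.pi) = (-1 : ℝ) ^ t := by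
    have := Real.cos_nat_mul_pi_sub 0 t
    simpa using this
  rw [h, Real.sin_add_pi_div_two, hc]
  have h1 : ((2 * t + 1 : ℕ) : ℝ) = 2 * (t : ℝ) + 1 := by push_cast; ring
  rw [h1]
  have h2 : (2 * (t : ℝ) + 1) ≠ 0 := by positivity
  have h3 : ((t : ℝ) + 1 / 2) ≠ 0 := by positivity
  field_simp

lemma inner_e_left (n : ℕ) (f : l2) : @inner ℂ _ _ (e n) f = f n := by
  rw [e, lp.inner_single_left]; simp [RCLike.inner_apply]

lemma inner_e_right (n : ℕ) (f : l2) : @inner ℂ _ _ f (e n) = conj (f n) := by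
  rw [e, lp.inner_single_right]; simp [RCLike.inner_apply]
lemma e_apply (n j : ℕ) : (e n : ∀ _ : ℕ, ℂ) j = if j = n then 1 else 0 := by
  rcases eq_or_ne j n with h | h
  · subst h; simp [e, lp.single_apply_self]
  · simp [e, lp.single_apply_ne _ _ _ h, h]
lemma inner_e_e (a b : ℕ) : @inner ℂ _ _ (e a) (e b) = if a = b then 1 else 0 := by
  rw [inner_e_left, e_apply]

noncomputable def v (j : ℕ) : WithLp 2 (l2 × l2) :=
  ((((-1 : ℝ) ^ (j / 2) / Real.sqrt 2 : ℝ) : ℂ)) •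
    (WithLp.equiv 2 (l2 × l2)).symm (e (j / 2), (((-1 : ℝ) ^ (j % 2) : ℝ) : ℂ) • e (j / 2))

lemma inner_v (j : ℕ) (w : WithLp 2 (l2 × l2)) :
    @inner ℂ _ _ (v j) w =
      (((-1 : ℝ) ^ (j / 2) / Real.sqrt 2 : ℝ) : ℂ) *
        (w.fst (j / 2) + (((-1 : ℝ) ^ (j % 2) : ℝ) : ℂ) * w.snd (j / 2)) := by
  rw [v, inner_smul_left, WithLp.prod_inner_apply]
  simp only [WithLp.equiv_symm_apply, WithLp.toLp_fst, WithLp.toLp_snd, WithLp.ofLp_fst, WithLp.ofLp_snd, inner_smul_left, inner_e_left,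
    Complex.conj_ofReal]

lemma sqrt_two_ne : (Real.sqrt 2 : ℂ) ≠ 0 := by
  simpa using Real.sqrt_ne_zero'.2 (by norm_num : (0:ℝ) < 2)

lemma neg_one_pow_mul_two (n : ℕ) : ((-1 : ℂ)) ^ (n * 2) = 1 := by
  rw [pow_mul', neg_one_sq, one_pow]

lemma v_fst (j : ℕ) : (v j).fst = (((-1 : ℝ) ^ (j / 2) / Real.sqrt 2 : ℝ) : ℂ) • e (j / 2) := rfl
lemma v_snd (j : ℕ) : (v j).snd = (((-1 : ℝ) ^ (j / 2) / Real.sqrt 2 : ℝ) : ℂ) •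
      ((((-1 : ℝ) ^ (j % 2) : ℝ) : ℂ) • e (j / 2)) := rfl

lemma v_orthonormal : Orthonormal ℂ v := by
  rw [orthonormal_iff_ite]
  intro i j
  rw [inner_v, v_fst, v_snd]
  simp only [lp.coeFn_smul, Pi.smul_apply, e_apply, smul_eq_mul]
  rcases eq_or_ne i j with h | h
  · subst h
    simp only [if_pos rfl, if_true]
    push_cast
    have h2 : (Real.sqrt 2 : ℂ) * (Real.sqrt 2 : ℂ) = 2 := by
      norm_cast; exact_mod_cast Real.mul_self_sqrt (by norm_num : (0:ℝ) ≤ 2)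
    field_simp
    rw [sq (Real.sqrt 2 : ℂ), h2]
    ring_nf
    simp [neg_one_pow_mul_two]
    norm_num
  · rcases eq_or_ne (i / 2) (j / 2) with h2 | h2
    · have hm : i % 2 ≠ j % 2 := by omega
      rw [if_neg h, h2, if_pos rfl]
      have hsgn : ((-1 : ℝ) ^ (i % 2) : ℝ) = -((-1 : ℝ) ^ (j % 2)) := by
        rcases Nat.mod_two_eq_zero_or_one i with hi | hi <;>
          rcases Nat.mod_two_eq_zero_or_one j with hj | hj <;> simp_all
      push_cast [hsgn]
      ring_nf
      simp [neg_one_pow_mul_two]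
    · rw [if_neg h, if_neg h2]
      push_cast
      ring

lemma coeff_ne (a : ℕ) : (((-1 : ℝ) ^ a / Real.sqrt 2 : ℝ) : ℂ) ≠ 0 := by
  rw [Complex.ofReal_ne_zero]
  apply div_ne_zero
  · positivity
  · simpa using Real.sqrt_ne_zero'.2 (by norm_num : (0:ℝ) < 2)

lemma v_span : (Submodule.span ℂ (Set.range v))ᗮ = ⊥ := by
  rw [Submodule.eq_bot_iff]
  intro w hw
  have hv : ∀ j : ℕ, @inner ℂ _ _ (v j) w = 0 := fun j =>
    (Submodule.mem_orthogonal _ w).1 hw _ (Submodule.subset_span ⟨j, rfl⟩)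
  have hcoord : ∀ a : ℕ, w.fst a = 0 ∧ w.snd a = 0 := by
    intro a
    have h1 := hv (2 * a)
    have h2 := hv (2 * a + 1)
    rw [inner_v] at h1 h2
    rw [show (2 * a) / 2 = a by omega, show (2 * a) % 2 = 0 by omega] at h1
    rw [show (2 * a + 1) / 2 = a by omega, show (2 * a + 1) % 2 = 1 by omega] at h2
    have h1' : w.fst a + w.snd a = 0 := by
      have := (mul_eq_zero.1 h1).resolve_left (coeff_ne a)
      simpa using this
    have h2' : w.fst a - w.snd a = 0 := by
      have := (mul_eq_zero.1 h2).resolve_left (coeff_ne a)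
      simp only [pow_one, Complex.ofReal_neg, Complex.ofReal_one, neg_one_mul] at this
      linear_combination this
    constructor
    · linear_combination (h1' + h2') / 2
    · linear_combination (h1' - h2') / 2
  have hf : w.fst = 0 := by
    apply lp.ext
    funext a
    simpa using (hcoord a).1
  have hs : w.snd = 0 := by
    apply lp.ext
    funext a
    simpa using (hcoord a).2
  have : @inner ℂ _ _ w w = 0 := by
    rw [WithLp.prod_inner_apply, WithLp.ofLp_fst, WithLp.ofLp_snd, hf, hs]
    simp
  exact inner_self_eq_zero.mp this

noncomputable def bV : HilbertBasis ℕ ℂ (WithLp 2 (l2 × l2)) :=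
  HilbertBasis.mkOfOrthogonalEqBot v_orthonormal v_span

lemma bV_coe : ⇑bV = v := HilbertBasis.coe_mkOfOrthogonalEqBot _ _

lemma e_span : (Submodule.span ℂ (Set.range e))ᗮ = ⊥ := by
  rw [Submodule.eq_bot_iff]
  intro w hw
  have hv : ∀ n : ℕ, @inner ℂ _ _ (e n) w = 0 := fun n =>
    (Submodule.mem_orthogonal _ w).1 hw _ (Submodule.subset_span ⟨n, rfl⟩)
  apply lp.ext
  funext n
  have := hv n
  rw [inner_e_left] at this
  simpa using this

lemma e_dense : Dense ((Submodule.span ℂ (Set.range e) : Submodule ℂ l2) : Set l2) := by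
  rw [Submodule.dense_iff_topologicalClosure_eq_top]
  exact Submodule.topologicalClosure_eq_top_iff.mpr e_span



lemma gen1 (x y z p D s : ℝ) (hs : s * s = 2) (hp : p ≠ 0) (hD : D ≠ 0) (hsn : s ≠ 0) :
    x*y*(z*(-1))/p * (1/D) =
      (y/s) * ((z*(-1))/p * (x/s * (1/D)) + (-1) * (z/p * (x/s * (1*(1/D))))) := by
  field_simp
  linear_combination (-(x*y*z)) * hs

lemma gen2 (x y z p D s : ℝ) (hs : s * s = 2) (hp : p ≠ 0) (hD : D ≠ 0) (hsn : s ≠ 0) :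
    x*y*(z*(-1))/p * (1/D) =
      (y/s) * ((z*(-1))/p * (x/s * (1/D)) + 1 * (z/p * (x/s * ((-1)*(1/D))))) := by
  field_simp
  linear_combination (-(x*y*z)) * hs

lemma key1 (a b m : ℕ) :
    ((-1:ℝ)^(a+b+m+1)/Real.pi * (1/(((a+b+m+1 : ℕ) : ℝ) + 1/2))) =
    ((-1:ℝ)^b/Real.sqrt 2) * (((-1:ℝ)^(m+1)/Real.pi) * (((-1:ℝ)^a/Real.sqrt 2) * (1/((a:ℝ)+b+m+3/2))) +
      ((-1:ℝ)^1) * (((-1:ℝ)^m/Real.pi) * (((-1:ℝ)^a/Real.sqrt 2) * (((-1:ℝ)^0) * (1/((a:ℝ)+b+m+3/2)))))) := by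
  have hs : Real.sqrt 2 * Real.sqrt 2 = 2 := Real.mul_self_sqrt (by norm_num)
  have hπ : Real.pi ≠ 0 := Real.pi_ne_zero
  have hsn : Real.sqrt 2 ≠ 0 := by
    simpa using Real.sqrt_ne_zero'.2 (by norm_num : (0:ℝ) < 2)
  have hd : (a:ℝ)+b+m+3/2 ≠ 0 := by positivity
  have hcast : ((a+b+m+1 : ℕ) : ℝ) + 1/2 = (a:ℝ)+b+m+3/2 := by push_cast; ring
  rw [hcast, pow_succ (-1:ℝ) (a+b+m), pow_add (-1:ℝ) (a+b) m, pow_add (-1:ℝ) a b,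
    pow_succ (-1:ℝ) m, pow_zero, pow_one]
  have := gen1 ((-1:ℝ)^a) ((-1:ℝ)^b) ((-1:ℝ)^m) Real.pi ((a:ℝ)+b+m+3/2) (Real.sqrt 2) hs hπ hd hsn
  linear_combination this

lemma key2 (a b m : ℕ) :
    ((-1:ℝ)^(a+b+m+1)/Real.pi * (1/(((a+b+m+1 : ℕ) : ℝ) + 1/2))) =
    ((-1:ℝ)^b/Real.sqrt 2) * (((-1:ℝ)^(m+1)/Real.pi) * (((-1:ℝ)^a/Real.sqrt 2) * (1/((a:ℝ)+b+m+3/2))) +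
      ((-1:ℝ)^0) * (((-1:ℝ)^m/Real.pi) * (((-1:ℝ)^a/Real.sqrt 2) * (((-1:ℝ)^1) * (1/((a:ℝ)+b+m+3/2)))))) := by
  have hs : Real.sqrt 2 * Real.sqrt 2 = 2 := Real.mul_self_sqrt (by norm_num)
  have hπ : Real.pi ≠ 0 := Real.pi_ne_zero
  have hsn : Real.sqrt 2 ≠ 0 := by
    simpa using Real.sqrt_ne_zero'.2 (by norm_num : (0:ℝ) < 2)
  have hd : (a:ℝ)+b+m+3/2 ≠ 0 := by positivity
  have hcast : ((a+b+m+1 : ℕ) : ℝ) + 1/2 = (a:ℝ)+b+m+3/2 := by push_cast; ring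
  rw [hcast, pow_succ (-1:ℝ) (a+b+m), pow_add (-1:ℝ) (a+b) m, pow_add (-1:ℝ) a b,
    pow_succ (-1:ℝ) m, pow_zero, pow_one]
  have := gen2 ((-1:ℝ)^a) ((-1:ℝ)^b) ((-1:ℝ)^m) Real.pi ((a:ℝ)+b+m+3/2) (Real.sqrt 2) hs hπ hd hsn
  linear_combination this


lemma key0 (a b m : ℕ) (h : ℝ) :
    (0:ℝ) = ((-1:ℝ)^b/Real.sqrt 2) * (((-1:ℝ)^(m+1)/Real.pi) * (((-1:ℝ)^a/Real.sqrt 2) * h) +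
      ((-1:ℝ)^0) * (((-1:ℝ)^m/Real.pi) * (((-1:ℝ)^a/Real.sqrt 2) * (((-1:ℝ)^0) * h)))) := by
  rw [pow_succ]; ring

lemma key0' (a b m : ℕ) (h : ℝ) :
    (0:ℝ) = ((-1:ℝ)^b/Real.sqrt 2) * (((-1:ℝ)^(m+1)/Real.pi) * (((-1:ℝ)^a/Real.sqrt 2) * h) +
      ((-1:ℝ)^1) * (((-1:ℝ)^m/Real.pi) * (((-1:ℝ)^a/Real.sqrt 2) * (((-1:ℝ)^1) * h)))) := by
  rw [pow_succ]; ring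

noncomputable def Uclm : l2 →L[ℂ] WithLp 2 (l2 × l2) :=
  (bV.repr.symm.toContinuousLinearEquiv : l2 ≃L[ℂ] WithLp 2 (l2 × l2)).toContinuousLinearMap

lemma Uclm_apply (x : l2) : Uclm x = bV.repr.symm x := rfl

noncomputable def fstClm : WithLp 2 (l2 × l2) →L[ℂ] l2 :=
  (ContinuousLinearMap.fst ℂ l2 l2).comp
    (WithLp.prodContinuousLinearEquiv 2 ℂ l2 l2 : WithLp 2 (l2 × l2) →L[ℂ] l2 × l2)

noncomputable def sndClm : WithLp 2 (l2 × l2) →L[ℂ] l2 :=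
  (ContinuousLinearMap.snd ℂ l2 l2).comp
    (WithLp.prodContinuousLinearEquiv 2 ℂ l2 l2 : WithLp 2 (l2 × l2) →L[ℂ] l2 × l2)

noncomputable def Bmap (c1 c2 : ℂ) (H : l2 →L[ℂ] l2) : l2 →L[ℂ] WithLp 2 (l2 × l2) :=
  ((WithLp.prodContinuousLinearEquiv 2 ℂ l2 l2).symm : l2 × l2 →L[ℂ] WithLp 2 (l2 × l2)).comp
    ((c1 • H.comp (fstClm.comp Uclm)).prod (c2 • H.comp (sndClm.comp Uclm)))

lemma Bmap_apply (c1 c2 : ℂ) (H : l2 →L[ℂ] l2) (x : l2) :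
    Bmap c1 c2 H x = (WithLp.equiv 2 (l2 × l2)).symm
      (c1 • H ((bV.repr.symm x).fst), c2 • H ((bV.repr.symm x).snd)) := rfl

lemma U_e (k : ℕ) : bV.repr.symm (e k) = v k := by
  rw [e, HilbertBasis.repr_symm_single, bV_coe]

theorem stmt_12 (m : ℕ) (S H : l2 →L[ℂ] l2)
    (hS : ∀ k n : ℕ, @inner ℂ _ _ (S (e k)) (e n) = ((cCoef (k + n + 2 * m + 2) : ℝ) : ℂ))
    (hH : ∀ k n : ℕ,
      @inner ℂ _ _ (H (e k)) (e n) = ((1 / ((k : ℝ) + n + m + 3 / 2) : ℝ) : ℂ)) :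
    ∃ U : l2 ≃ₗᵢ[ℂ] WithLp 2 (l2 × l2),
      ∀ x : l2,
        WithLp.equiv 2 (l2 × l2) (U (S x)) =
          ((((-1 : ℝ) ^ (m + 1) / Real.pi : ℝ) : ℂ) • H ((WithLp.equiv 2 (l2 × l2) (U x)).1),
            (((-1 : ℝ) ^ m / Real.pi : ℝ) : ℂ) • H ((WithLp.equiv 2 (l2 × l2) (U x)).2)) := by
  have hS' : ∀ k n : ℕ, (S (e k) : ∀ _ : ℕ, ℂ) n = ((cCoef (k + n + 2 * m + 2) : ℝ) : ℂ) := by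
    intro k n
    have h := hS k n
    rw [inner_e_right] at h
    calc (S (e k) : ∀ _ : ℕ, ℂ) n = conj (conj ((S (e k) : ∀ _ : ℕ, ℂ) n)) := (Complex.conj_conj _).symm
      _ = conj (((cCoef (k + n + 2 * m + 2) : ℝ) : ℂ)) := by rw [h]
      _ = _ := Complex.conj_ofReal _
  have hH' : ∀ k n : ℕ, (H (e k) : ∀ _ : ℕ, ℂ) n = ((1 / ((k : ℝ) + n + m + 3 / 2) : ℝ) : ℂ) := by
    intro k n
    have h := hH k n
    rw [inner_e_right] at h
    calc (H (e k) : ∀ _ : ℕ, ℂ) n = conj (conj ((H (e k) : ∀ _ : ℕ, ℂ) n)) := (Complex.conj_conj _).symm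
      _ = conj (((1 / ((k : ℝ) + n + m + 3 / 2) : ℝ) : ℂ)) := by rw [h]
      _ = _ := Complex.conj_ofReal _
  set c1 : ℂ := (((-1 : ℝ) ^ (m + 1) / Real.pi : ℝ) : ℂ) with hc1
  set c2 : ℂ := (((-1 : ℝ) ^ m / Real.pi : ℝ) : ℂ) with hc2
  have hAB : Uclm.comp S = Bmap c1 c2 H := by
    apply ContinuousLinearMap.ext_on e_dense
    rintro _ ⟨k, rfl⟩
    show Uclm (S (e k)) = Bmap c1 c2 H (e k)
    rw [Uclm_apply, Bmap_apply, U_e]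
    refine bV.repr.injective ?_
    rw [LinearIsometryEquiv.apply_symm_apply]
    apply lp.ext
    funext j
    have hrepr : ∀ w : WithLp 2 (l2 × l2), (bV.repr w : ∀ _ : ℕ, ℂ) j = @inner ℂ _ _ (v j) w := by
      intro w
      rw [HilbertBasis.repr_apply_apply, bV_coe]
    rw [hrepr, inner_v, hS']
    simp only [WithLp.equiv_symm_apply, WithLp.toLp_fst, WithLp.toLp_snd, v_fst, v_snd]
    rw [_root_.map_smul, _root_.map_smul, _root_.map_smul]
    simp only [lp.coeFn_smul, Pi.smul_apply, smul_eq_mul]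
    rw [hH' (k / 2) (j / 2)]
    rcases Nat.even_or_odd' k with ⟨a, hk | hk⟩ <;> rcases Nat.even_or_odd' j with ⟨b, hj | hj⟩ <;>
      subst hk <;> subst hj
    · rw [show (2 * a) / 2 = a by omega, show (2 * b) / 2 = b by omega,
        show (2 * a) % 2 = 0 by omega, show (2 * b) % 2 = 0 by omega,
        show 2 * a + 2 * b + 2 * m + 2 = 2 * (a + b + m + 1) by ring, cCoef_even]
      rw [hc1, hc2]
      exact_mod_cast key0 a b m (1/((a:ℝ)+b+m+3/2))
    · rw [show (2 * a) / 2 = a by omega, show (2 * b + 1) / 2 = b by omega,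
        show (2 * a) % 2 = 0 by omega, show (2 * b + 1) % 2 = 1 by omega,
        show 2 * a + (2 * b + 1) + 2 * m + 2 = 2 * (a + b + m + 1) + 1 by ring, cCoef_odd]
      rw [hc1, hc2]
      exact_mod_cast key1 a b m
    · rw [show (2 * a + 1) / 2 = a by omega, show (2 * b) / 2 = b by omega,
        show (2 * a + 1) % 2 = 1 by omega, show (2 * b) % 2 = 0 by omega,
        show 2 * a + 1 + 2 * b + 2 * m + 2 = 2 * (a + b + m + 1) + 1 by ring, cCoef_odd]
      rw [hc1, hc2]
      exact_mod_cast key2 a b m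
    · rw [show (2 * a + 1) / 2 = a by omega, show (2 * b + 1) / 2 = b by omega,
        show (2 * a + 1) % 2 = 1 by omega, show (2 * b + 1) % 2 = 1 by omega,
        show 2 * a + 1 + (2 * b + 1) + 2 * m + 2 = 2 * (a + b + m + 2) by ring, cCoef_even]
      rw [hc1, hc2]
      exact_mod_cast key0' a b m (1/((a:ℝ)+b+m+3/2))
  refine ⟨bV.repr.symm, fun x => ?_⟩
  have hx := DFunLike.congr_fun hAB x
  rw [ContinuousLinearMap.comp_apply, Uclm_apply, Bmap_apply] at hx
  have := congrArg (WithLp.equiv 2 (l2 × l2)) hx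
  rw [Equiv.apply_symm_apply] at this
  rw [this]
  simp
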